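/- Let B be an affine domain over an algebraically closed field k of characteristic 0 with a locally nilpotent derivation δ whose kernel A is a UFD, and assume B is faithfully flat over A. Then the plinth ideal δ(B) ∩ A is a principal ideal of A. -/

import Mathlib

set_option synthInstance.maxHeartbeats 1000000
set_option maxHeartbeats 1000000

open TensorProduct

universe u

private lemma aux_mksmul {R : Type*} [CommRing R] (I : Ideal R) (r y : R) :
    r • (Ideal.Quotient.mk I y) = Ideal.Quotient.mk I (r * y) := by
  rw [← smul_eq_mul]
  rfl

/-- For a faithfully flat algebra, ideals are contracted: `A ∩ I·B = I`. -/
private lemma aux_faithful {R S : Type*} [CommRing R] [CommRing S] [Algebra R S]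
    [Module.FaithfullyFlat R S] (I : Ideal R) (x : R)
    (hx : algebraMap R S x ∈ I.map (algebraMap R S)) : x ∈ I := by
  have key : ∀ w ∈ I.map (algebraMap R S),
      (w ⊗ₜ[R] (Ideal.Quotient.mk I 1) : S ⊗[R] (R ⧸ I)) = 0 := by
    intro w hw
    rw [Ideal.map] at hw
    induction hw using Submodule.span_induction with
    | mem w hw =>
        obtain ⟨i, hi, rfl⟩ := hw
        rw [Algebra.algebraMap_eq_smul_one, smul_tmul, aux_mksmul, mul_one,
          Ideal.Quotient.eq_zero_iff_mem.2 hi, tmul_zero]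
    | zero => rw [zero_tmul]
    | add u v _ _ hu hv => rw [add_tmul, hu, hv, add_zero]
    | smul s w _ hw => rw [← smul_tmul', hw, smul_zero]
  have hf : LinearMap.toSpanSingleton R (R ⧸ I) (Ideal.Quotient.mk I x) = 0 := by
    rw [Module.FaithfullyFlat.zero_iff_lTensor_zero R S]
    apply TensorProduct.ext'
    intro s r
    rw [LinearMap.lTensor_tmul, LinearMap.zero_apply]
    show s ⊗ₜ (r • Ideal.Quotient.mk I x) = 0
    have : r • (Ideal.Quotient.mk I x) = (r * x) • (Ideal.Quotient.mk I 1) := by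
      rw [aux_mksmul, aux_mksmul, mul_one]
    rw [this, tmul_smul, smul_tmul']
    have hmem : ((r * x) • s) ∈ I.map (algebraMap R S) := by
      rw [Algebra.smul_def, map_mul, mul_assoc]
      exact Ideal.mul_mem_left _ _ (Ideal.mul_mem_right _ _ hx)
    rw [key _ hmem]
  have := congrArg (fun f => f 1) hf
  simpa [Ideal.Quotient.eq_zero_iff_mem] using this

/-- In a flat algebra, a relation `b₁ y₂ = b₂ y₁` with `b₁, b₂` "coprime" implies
`b₂ ∣ y₂`. -/
private lemma aux_flat {R S : Type u} [CommRing R] [CommRing S] [Algebra R S] [Module.Flat R S]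
    {b₁ b₂ : R} (H : ∀ t s : R, b₁ * t = b₂ * s → b₂ ∣ t)
    {y₁ y₂ : S} (h : b₁ • y₂ = b₂ • y₁) : ∃ c : S, y₂ = b₂ • c := by
  classical
  set f : ULift.{u} (Fin 2) → R := fun i => if i.down = 0 then b₁ else -b₂ with hf
  set x : ULift.{u} (Fin 2) → S := fun i => if i.down = 0 then y₂ else y₁ with hxdef
  have sum_eq : ∀ {M : Type u} [AddCommMonoid M] (g : ULift.{u} (Fin 2) → M),
      ∑ i, g i = g (ULift.up 0) + g (ULift.up 1) := by
    intro M _ g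
    rw [Fintype.sum_equiv (Equiv.ulift : ULift.{u} (Fin 2) ≃ Fin 2) g
      (fun j => g (ULift.up j)) (fun i => rfl), Fin.sum_univ_two]
  have ef0 : f (ULift.up 0) = b₁ := if_pos rfl
  have ef1 : f (ULift.up 1) = -b₂ := if_neg (by decide)
  have ex0 : x (ULift.up 0) = y₂ := if_pos rfl
  have ex1 : x (ULift.up 1) = y₁ := if_neg (by decide)
  have hrel : ∑ i, f i • x i = 0 := by
    rw [sum_eq, ef0, ef1, ex0, ex1, neg_smul, h, add_neg_cancel]
  have htriv : Module.IsTrivialRelation f x :=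
    Module.Flat.isTrivialRelation_of_sum_smul_eq_zero (by exact hrel)
  obtain ⟨κ, a, y, hxy, hfa⟩ := htriv
  have key : ∀ j, b₂ ∣ a (ULift.up 0) j := by
    intro j
    have h2 := hfa j
    rw [sum_eq, ef0, ef1] at h2
    exact H _ (a (ULift.up 1) j) (by linear_combination h2)
  choose c hc using key
  refine ⟨∑ j, c j • y j, ?_⟩
  have hy₂ : y₂ = ∑ j, a (ULift.up 0) j • y j := by rw [← ex0]; exact hxy (ULift.up 0)
  rw [hy₂, Finset.smul_sum]
  refine Finset.sum_congr rfl fun j _ => ?_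
  rw [hc j, mul_smul]

/-- Lemma 2.1: if `B` is an affine domain over an algebraically closed field of
characteristic `0` with locally nilpotent derivation `δ`, the kernel `A` is a UFD,
and `B` is faithfully flat over `A`, then the plinth ideal `δ(B) ∩ A` is a
principal ideal of `A`. -/
theorem stmt9 {k B : Type*} [Field k] [IsAlgClosed k] [CharZero k]
    [CommRing B] [IsDomain B] [Algebra k B] [Algebra.FiniteType k B]
    (δ : Derivation k B B) (hln : ∀ b : B, ∃ n : ℕ, (⇑δ)^[n] b = 0)
    (A : Subalgebra k B) (hA : ∀ b : B, b ∈ A ↔ δ b = 0)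
    [UniqueFactorizationMonoid A] [Module.FaithfullyFlat A B]
    (P : Ideal A) (hP : ∀ x : A, x ∈ P ↔ ∃ b : B, δ b = x) :
    P.IsPrincipal := by
  classical
  letI : NormalizationMonoid A := UniqueFactorizationMonoid.normalizationMonoid.toNormalizationMonoid
  letI : NormalizedGCDMonoid A := UniqueFactorizationMonoid.toNormalizedGCDMonoid A
  by_cases hbot : P = ⊥
  · exact hbot ▸ ⟨⟨0, (Ideal.span_zero).symm⟩⟩
  obtain ⟨z, hzP, hz0⟩ := Submodule.exists_mem_ne_zero_of_ne_bot hbot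
  obtain ⟨g, ⟨hgP, hg0⟩, hmin⟩ :=
    wellFounded_dvdNotUnit.has_min {a : A | a ∈ P ∧ a ≠ 0} ⟨z, hzP, hz0⟩
  have hδA : ∀ z : A, δ (z : B) = 0 := fun z => (hA z).1 z.2
  have halg : ∀ z : A, algebraMap A B z = (z : B) := fun z => rfl
  suffices hdvd : ∀ q ∈ P, g ∣ q by
    refine ⟨⟨g, le_antisymm (fun p hp => Ideal.mem_span_singleton.2 (hdvd p hp))
      ((Ideal.span_singleton_le_iff_mem P).2 hgP)⟩⟩
  intro q hq
  by_cases hq0 : q = 0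
  · simp [hq0]
  obtain ⟨b₁, hb₁⟩ := gcd_dvd_left g q
  obtain ⟨b₂, hb₂⟩ := gcd_dvd_right g q
  set d := gcd g q with hd
  have hd0 : d ≠ 0 := fun h => hg0 (by rw [hb₁, h, zero_mul])
  have hb₂0 : b₂ ≠ 0 := fun h => hq0 (by rw [hb₂, h, mul_zero])
  -- the cofactors are relatively prime
  have hrel : IsRelPrime b₁ b₂ := by
    intro t ht1 ht2
    have hdt : d * t ∣ d := dvd_gcd (hb₁ ▸ mul_dvd_mul_left d ht1) (hb₂ ▸ mul_dvd_mul_left d ht2)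
    obtain ⟨e, he⟩ := hdt
    refine IsUnit.of_mul_eq_one (a := t) e (mul_left_cancel₀ hd0 ?_)
    rw [mul_one, ← mul_assoc]
    exact he.symm
  obtain ⟨s₁, hs₁⟩ := (hP g).1 hgP
  obtain ⟨s₂, hs₂⟩ := (hP q).1 hq
  -- the element g s₂ - q s₁ lies in A
  have hu : δ ((g : B) * s₂ - (q : B) * s₁) = 0 := by
    simp only [map_sub, Derivation.leibniz, smul_eq_mul, hδA, hs₁, hs₂, mul_zero, add_zero]
    ring
  have humem : ((g : B) * s₂ - (q : B) * s₁) ∈ A := (hA _).2 hu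
  set u' : A := ⟨(g : B) * s₂ - (q : B) * s₁, humem⟩ with hu'
  -- it lies in the extension of (g, q), hence in (g, q) by faithful flatness
  have hu'span : u' ∈ Ideal.span ({g, q} : Set A) := by
    apply aux_faithful (S := B)
    rw [halg]
    have hgJ : (g : B) ∈ (Ideal.span ({g, q} : Set A)).map (algebraMap A B) :=
      halg g ▸ Ideal.mem_map_of_mem _ (Ideal.subset_span (by simp))
    have hqJ : (q : B) ∈ (Ideal.span ({g, q} : Set A)).map (algebraMap A B) :=
      halg q ▸ Ideal.mem_map_of_mem _ (Ideal.subset_span (by simp))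
    exact sub_mem (mul_comm (g : B) s₂ ▸ Ideal.mul_mem_left _ s₂ hgJ)
      (mul_comm (q : B) s₁ ▸ Ideal.mul_mem_left _ s₁ hqJ)
  obtain ⟨xx, yy, hxy⟩ := Ideal.mem_span_pair.1 hu'span
  -- pass to an equation in B and cancel d
  have hgB : (g : B) = (d : B) * (b₁ : B) := by exact_mod_cast congrArg Subtype.val hb₁
  have hqB : (q : B) = (d : B) * (b₂ : B) := by exact_mod_cast congrArg Subtype.val hb₂
  have hcoe : (xx : B) * (g : B) + (yy : B) * (q : B) = (g : B) * s₂ - (q : B) * s₁ := by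
    have h0 : ((xx * g + yy * q : A) : B) = ((u' : A) : B) := congrArg Subtype.val hxy
    have h1 : ((u' : A) : B) = (g : B) * s₂ - (q : B) * s₁ := rfl
    rw [h1] at h0
    push_cast at h0
    exact h0
  have hdB0 : (d : B) ≠ 0 := fun h => hd0 (ZeroMemClass.coe_eq_zero.1 h)
  have hb₂B0 : (b₂ : B) ≠ 0 := fun h => hb₂0 (ZeroMemClass.coe_eq_zero.1 h)
  have heq2 : (b₁ : B) * (s₂ - (xx : B)) = (b₂ : B) * (s₁ + (yy : B)) := by
    apply mul_left_cancel₀ hdB0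
    rw [← mul_assoc, ← mul_assoc, ← hgB, ← hqB]
    linear_combination -hcoe
  -- use flatness to divide
  have hsmul : b₁ • (s₂ - (xx : B)) = b₂ • (s₁ + (yy : B)) := by
    rw [Algebra.smul_def, Algebra.smul_def, halg, halg]
    exact heq2
  obtain ⟨c, hc⟩ := aux_flat (fun t s hts => hrel.symm.dvd_of_dvd_mul_left ⟨s, hts⟩) hsmul
  rw [Algebra.smul_def, halg] at hc
  -- compute δ c = d
  have hδc : δ c = (d : B) := by
    apply mul_left_cancel₀ hb₂B0
    have h1 : δ (s₂ - (xx : B)) = (q : B) := by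
      rw [map_sub, hs₂, hδA, sub_zero]
    have h2 : δ ((b₂ : B) * c) = (b₂ : B) * δ c := by
      rw [Derivation.leibniz, smul_eq_mul, smul_eq_mul, hδA, mul_zero, add_zero]
    rw [← h2, ← hc, h1, hqB, mul_comm]
  have hdP : d ∈ P := (hP d).2 ⟨c, hδc⟩
  -- minimality forces b₁ to be a unit, hence g ∣ d ∣ q
  have hnd : ¬ DvdNotUnit d g := hmin d ⟨hdP, hd0⟩
  have hub₁ : IsUnit b₁ := by
    by_contra hnb
    exact hnd ⟨hd0, b₁, hnb, hb₁⟩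
  obtain ⟨v, hv⟩ := hub₁
  have hgd : g ∣ d := ⟨(v⁻¹ : Aˣ), by rw [hb₁, ← hv, mul_assoc, Units.mul_inv, mul_one]⟩
  exact hgd.trans ⟨b₂, hb₂⟩
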